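/- Let τ be a caterpillar binary hierarchy over a finite index set J, i.e., a binary hierarchy in which every nonsingleton cluster of C(τ) has at least one singleton child. Then the number of partitions of J compatible with τ equals |J|. -/

import Mathlib

open Finset

/-- A binary hierarchy over a finite index set `J`, encoded by its cluster set:
a laminar family of nonempty subsets of `J` containing the root `J` and all
singletons, in which every nonsingleton member is the disjoint union of exactly
two members (its children). -/
structure BinaryHierarchy (J : Type*) [DecidableEq J] [Fintype J] where
  clusters : Finset (Finset J)
  root_mem : (Finset.univ : Finset J) ∈ clusters
  singleton_mem : ∀ j : J, ({j} : Finset J) ∈ clusters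
  nonempty_of_mem : ∀ I ∈ clusters, I.Nonempty
  laminar : ∀ I ∈ clusters, ∀ K ∈ clusters, I ⊆ K ∨ K ⊆ I ∨ Disjoint I K
  binary_split : ∀ I ∈ clusters, 1 < I.card →
    ∃ L ∈ clusters, ∃ R ∈ clusters, Disjoint L R ∧ L ∪ R = I

variable {J : Type*} [DecidableEq J] [Fintype J]

/-- The parent of a cluster `I`: the smallest member of the (laminar) family strictly
containing `I`, realized as the intersection of all members strictly containing `I`
(these form a chain in a laminar family). -/
def BinaryHierarchy.parent (τ : BinaryHierarchy J) (I : Finset J) : Finset J :=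
  (τ.clusters.filter fun K => I ⊂ K).inf id

/-- The sibling (local complement) of a cluster `I`. -/
def BinaryHierarchy.sibling (τ : BinaryHierarchy J) (I : Finset J) : Finset J :=
  τ.parent I \ I

/-- `P` is a partition of the finite set `K`: its blocks are nonempty, pairwise
disjoint, and their union is `K`. -/
def IsPartitionOf (P : Finset (Finset J)) (K : Finset J) : Prop :=
  (∀ B ∈ P, B.Nonempty) ∧
  (∀ B ∈ P, ∀ B' ∈ P, B ≠ B' → Disjoint B B') ∧
  P.sup id = K

private lemma block_subset {P : Finset (Finset J)} {K : Finset J}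
    (h : IsPartitionOf P K) {B : Finset J} (hB : B ∈ P) : B ⊆ K := by
  have := Finset.le_sup (f := id) hB
  rwa [h.2.2] at this

private lemma eq_singleton_of_mem {P : Finset (Finset J)} {K : Finset J}
    (h : IsPartitionOf P K) (hKP : K ∈ P) : P = {K} := by
  ext B
  simp only [Finset.mem_singleton]
  constructor
  · intro hB
    by_contra hne
    have hd : Disjoint B K := h.2.1 B hB K hKP hne
    obtain ⟨x, hx⟩ := h.1 B hB
    exact (Finset.disjoint_left.mp hd) hx (block_subset h hB hx)
  · rintro rfl; exact hKP

private lemma singleton_block_mem {τ : BinaryHierarchy J} {P : Finset (Finset J)}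
    {K : Finset J} {j : J}
    (hP : IsPartitionOf P K) (hPc : ∀ B ∈ P, B ∈ τ.clusters)
    (hje : K.erase j ∈ τ.clusters) (hj : j ∈ K) (hKP : K ∉ P) : ({j} : Finset J) ∈ P := by
  have hjsup : j ∈ P.sup id := by rw [hP.2.2]; exact hj
  obtain ⟨B, hB, hjB⟩ := Finset.mem_sup.mp hjsup
  have hBK : B ⊆ K := block_subset hP hB
  have hBc : B ∈ τ.clusters := hPc B hB
  have : B = {j} := by
    rcases τ.laminar B hBc (K.erase j) hje with h1 | h2 | h3
    · exact absurd (h1 hjB) (Finset.notMem_erase j K)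
    · exfalso
      have : K ⊆ B := by
        intro x hx
        rcases eq_or_ne x j with rfl | hne
        · exact hjB
        · exact h2 (Finset.mem_erase.mpr ⟨hne, hx⟩)
      exact hKP ((Finset.Subset.antisymm hBK this) ▸ hB)
    · apply Finset.Subset.antisymm _ (Finset.singleton_subset_iff.mpr hjB)
      intro x hx
      have hxK : x ∈ K := hBK hx
      have : x ∉ K.erase j := fun hc => (Finset.disjoint_left.mp h3) hx hc
      simp only [Finset.mem_erase, not_and] at this
      exact Finset.mem_singleton.mpr (by by_contra hne; exact (this hne) hxK)
  exact this ▸ hB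

private lemma erase_partition {P : Finset (Finset J)} {K : Finset J} {j : J}
    (hP : IsPartitionOf P K) (hj : j ∈ K) (hjP : ({j} : Finset J) ∈ P) :
    IsPartitionOf (P.erase {j}) (K.erase j) := by
  refine ⟨fun B hB => hP.1 B (Finset.mem_of_mem_erase hB),
    fun B hB B' hB' hne => hP.2.1 B (Finset.mem_of_mem_erase hB) B' (Finset.mem_of_mem_erase hB') hne, ?_⟩
  have hnotin : ∀ B ∈ P.erase {j}, j ∉ B := by
    intro B hB hjB
    obtain ⟨hne, hBP⟩ := Finset.mem_erase.mp hB
    have hd := hP.2.1 B hBP {j} hjP hne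
    exact (Finset.disjoint_left.mp hd) hjB (Finset.mem_singleton_self j)
  apply Finset.Subset.antisymm
  · intro x hx
    obtain ⟨B, hB, hxB⟩ := Finset.mem_sup.mp hx
    refine Finset.mem_erase.mpr ⟨fun h => hnotin B hB (h ▸ hxB), ?_⟩
    exact block_subset hP (Finset.mem_of_mem_erase hB) hxB
  · intro x hx
    obtain ⟨hxj, hxK⟩ := Finset.mem_erase.mp hx
    have : x ∈ P.sup id := by rw [hP.2.2]; exact hxK
    obtain ⟨B, hB, hxB⟩ := Finset.mem_sup.mp this
    have hBne : B ≠ {j} := by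
      rintro rfl; exact hxj (Finset.mem_singleton.mp hxB)
    exact Finset.mem_sup.mpr ⟨B, Finset.mem_erase.mpr ⟨hBne, hB⟩, hxB⟩

private lemma insert_partition {P' : Finset (Finset J)} {K : Finset J} {j : J}
    (hP' : IsPartitionOf P' (K.erase j)) (hj : j ∈ K) :
    IsPartitionOf (insert ({j} : Finset J) P') K := by
  have hnotin : ∀ B ∈ P', j ∉ B := fun B hB hjB =>
    Finset.notMem_erase j K (block_subset hP' hB hjB)
  refine ⟨?_, ?_, ?_⟩
  · intro B hB
    rcases Finset.mem_insert.mp hB with rfl | hB'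
    · exact Finset.singleton_nonempty j
    · exact hP'.1 B hB'
  · intro B hB B' hB' hne
    rcases Finset.mem_insert.mp hB with rfl | h1 <;> rcases Finset.mem_insert.mp hB' with rfl | h2
    · exact absurd rfl hne
    · exact Finset.disjoint_singleton_left.mpr (hnotin B' h2)
    · exact (Finset.disjoint_singleton_left.mpr (hnotin B h1)).symm
    · exact hP'.2.1 B h1 B' h2 hne
  · rw [Finset.sup_insert, hP'.2.2]
    show ({j} : Finset J) ⊔ K.erase j = K
    rw [sup_eq_union]
    ext x
    simp only [Finset.mem_union, Finset.mem_singleton, Finset.mem_erase]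
    constructor
    · rintro (rfl | ⟨-, h⟩)
      exacts [hj, h]
    · intro hx
      rcases eq_or_ne x j with rfl | hne
      exacts [Or.inl rfl, Or.inr ⟨hne, hx⟩]

private lemma key_count (τ : BinaryHierarchy J)
    (hcat : ∀ I ∈ τ.clusters, 1 < I.card →
      ∃ j ∈ I, ({j} : Finset J) ∈ τ.clusters ∧ I.erase j ∈ τ.clusters) :
    ∀ n : ℕ, ∀ K ∈ τ.clusters, K.card = n →
      Nat.card {P : Finset (Finset J) //
        IsPartitionOf P K ∧ ∀ B ∈ P, B ∈ τ.clusters} = n := by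
  intro n
  induction n using Nat.strong_induction_on with
  | _ n ih =>
  intro K hK hcard
  rcases Nat.lt_or_ge n 2 with hlt | hge
  · -- base case: n = 1
    have hpos : 0 < K.card := (τ.nonempty_of_mem K hK).card_pos
    have hn1 : n = 1 := by omega
    subst hn1
    have huniq : ∀ P : Finset (Finset J),
        IsPartitionOf P K ∧ (∀ B ∈ P, B ∈ τ.clusters) → P = {K} := by
      intro P ⟨hP, _⟩
      have hKP : K ∈ P := by
        have hKne : K.Nonempty := τ.nonempty_of_mem K hK
        obtain ⟨x, hx⟩ := hKne
        have : x ∈ P.sup id := by rw [hP.2.2]; exact hx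
        obtain ⟨B, hB, hxB⟩ := Finset.mem_sup.mp this
        have hBK : B ⊆ K := block_subset hP hB
        have : B = K := Finset.eq_of_subset_of_card_le hBK
          (by rw [hcard]; exact (hP.1 B hB).card_pos)
        exact this ▸ hB
      exact eq_singleton_of_mem hP hKP
    haveI : Unique {P : Finset (Finset J) //
        IsPartitionOf P K ∧ ∀ B ∈ P, B ∈ τ.clusters} :=
      { default := ⟨{K}, ⟨⟨fun B hB => (Finset.mem_singleton.mp hB) ▸ τ.nonempty_of_mem K hK,
          fun B hB B' hB' hne => absurd ((Finset.mem_singleton.mp hB).trans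
            (Finset.mem_singleton.mp hB').symm) hne,
          Finset.sup_singleton⟩, fun B hB => (Finset.mem_singleton.mp hB) ▸ hK⟩⟩
        uniq := fun P => Subtype.ext (huniq P.1 P.2) }
    exact Nat.card_unique
  · -- inductive step
    obtain ⟨j, hj, hjs, hje⟩ := hcat K hK (by omega)
    have hcard' : (K.erase j).card = n - 1 := by
      rw [Finset.card_erase_of_mem hj, hcard]
    have hKnotsingle : K ≠ ({j} : Finset J) := by
      rintro rfl; simp at hcard; omega
    have hKnotsub : ∀ P' : Finset (Finset J), IsPartitionOf P' (K.erase j) →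
        K ∉ insert ({j} : Finset J) P' := by
      intro P' hP' hmem
      rcases Finset.mem_insert.mp hmem with h | h
      · exact hKnotsingle h
      · exact Finset.notMem_erase j K (block_subset hP' h hj)
    have hjnot : ∀ P' : Finset (Finset J), IsPartitionOf P' (K.erase j) →
        ({j} : Finset J) ∉ P' := by
      intro P' hP' hmem
      exact Finset.notMem_erase j K (block_subset hP' hmem (Finset.mem_singleton_self j))
    classical
    let e : {P : Finset (Finset J) // IsPartitionOf P K ∧ ∀ B ∈ P, B ∈ τ.clusters} ≃
        Option {P : Finset (Finset J) //
          IsPartitionOf P (K.erase j) ∧ ∀ B ∈ P, B ∈ τ.clusters} :=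
      { toFun := fun P =>
          if h : K ∈ P.1 then none
          else some ⟨P.1.erase {j},
            erase_partition P.2.1 hj (singleton_block_mem P.2.1 P.2.2 hje hj h),
            fun B hB => P.2.2 B (Finset.mem_of_mem_erase hB)⟩
        invFun := fun o => o.elim
          ⟨{K}, ⟨⟨fun B hB => (Finset.mem_singleton.mp hB) ▸ τ.nonempty_of_mem K hK,
            fun B hB B' hB' hne => absurd ((Finset.mem_singleton.mp hB).trans
              (Finset.mem_singleton.mp hB').symm) hne,
            Finset.sup_singleton⟩, fun B hB => (Finset.mem_singleton.mp hB) ▸ hK⟩⟩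
          (fun P' => ⟨insert ({j} : Finset J) P'.1, insert_partition P'.2.1 hj,
            fun B hB => by
              rcases Finset.mem_insert.mp hB with rfl | h
              · exact hjs
              · exact P'.2.2 B h⟩)
        left_inv := by
          rintro ⟨P, hP, hPc⟩
          by_cases h : K ∈ P
          · simp only [h, dif_pos]
            exact Subtype.ext (eq_singleton_of_mem hP h).symm
          · simp only [h, dif_neg, not_false_iff, Option.elim]
            exact Subtype.ext
              (Finset.insert_erase (singleton_block_mem hP hPc hje hj h))
        right_inv := by
          rintro (_ | ⟨P', hP', hPc'⟩)
          · simp only [Option.elim]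
            exact dif_pos (Finset.mem_singleton_self K)
          · simp only [Option.elim]
            refine (dif_neg (hKnotsub P' hP')).trans ?_
            exact congrArg some (Subtype.ext (Finset.erase_insert (hjnot P' hP'))) }
    rw [Nat.card_congr e, Finite.card_option, ih (n - 1) (by omega) (K.erase j) hje hcard']
    omega

/-- for a caterpillar hierarchy (every nonsingleton cluster has a
singleton child) the number of compatible partitions of `J` equals `|J|`. -/
theorem caterpillar_partition_count (τ : BinaryHierarchy J)
    (hcat : ∀ I ∈ τ.clusters, 1 < I.card →
      ∃ j ∈ I, ({j} : Finset J) ∈ τ.clusters ∧ I.erase j ∈ τ.clusters) :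
    Nat.card {P : Finset (Finset J) //
        IsPartitionOf P (Finset.univ : Finset J) ∧ ∀ B ∈ P, B ∈ τ.clusters} =
      Fintype.card J := by
  have := key_count τ hcat (Fintype.card J) Finset.univ τ.root_mem (Finset.card_univ)
  exact this
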